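/- Telescoping consequence of the BA identity: if F_μ(P_{Z|XT}, Q_{Z|X}) ≤ F_μ(P^{(k+1)}, Q^{(k)}) for all k (with Q_{Z|X} = Q(P_{Z|XT})), then for all N > M ≥ 1, 0 ≤ Σ_{k=M}^{N−1} [F_μ(P^{(k+1)}, Q^{(k)}) − F_μ(P_{Z|XT}, Q_{Z|X})] ≤ D(Q_{Z|X} ∥ Q^{(M)} | P_X) − D(Q_{Z|X} ∥ Q^{(N)} | P_X); hence the series Σ_k [F_μ(P^{(k+1)}, Q^{(k)}) − F_μ(P_{Z|XT}, Q_{Z|X})] converges and F_μ(P^{(k+1)}, Q^{(k)}) → F_μ(P_{Z|XT}, Q_{Z|X}). -/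

import Mathlib

open Finset Filter

/-- Joint law of (X,T): `P_{XT}(x,t) = P_X(x) ∑_s P_S(s) P_{T|XS}(t|x,s)`. -/
noncomputable def pXT {X S T : Type} [Fintype S]
    (pX : X → ℝ) (pS : S → ℝ) (pTXS : X → S → T → ℝ) (x : X) (t : T) : ℝ :=
  pX x * ∑ s, pS s * pTXS x s t

/-- `F_μ(P_{Z|XT}, Q_{Z|X}) = D(P_{Z|XT} ∥ Q_{Z|X} | P_{XT}) − μ E[d(S,Z)]`. -/
noncomputable def Fmu {X S T Z : Type} [Fintype X] [Fintype S] [Fintype T] [Fintype Z]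
    (μ : ℝ) (pX : X → ℝ) (pS : S → ℝ) (pTXS : X → S → T → ℝ) (d : S → Z → ℝ)
    (P : X → T → Z → ℝ) (Q : X → Z → ℝ) : ℝ :=
  (∑ x, ∑ t, pXT pX pS pTXS x t * ∑ z, P x t z * Real.log (P x t z / Q x z))
    - μ * ∑ x, ∑ s, ∑ t, ∑ z, pX x * pS s * pTXS x s t * P x t z * d s z

/-- Posterior expectation `E[d(S,z)|x,t]`. -/
noncomputable def condExpD {X S T Z : Type} [Fintype S]
    (pS : S → ℝ) (pTXS : X → S → T → ℝ) (d : S → Z → ℝ) (x : X) (t : T) (z : Z) : ℝ :=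
  ∑ s, (pS s * pTXS x s t / ∑ s', pS s' * pTXS x s' t) * d s z

/-- The Gibbs-type update `P(Q)`. -/
noncomputable def updP {X S T Z : Type} [Fintype S] [Fintype Z]
    (μ : ℝ) (pS : S → ℝ) (pTXS : X → S → T → ℝ) (d : S → Z → ℝ)
    (Q : X → Z → ℝ) (x : X) (t : T) (z : Z) : ℝ :=
  Q x z * Real.exp (μ * condExpD pS pTXS d x t z) /
    ∑ a, Q x a * Real.exp (μ * condExpD pS pTXS d x t a)

/-- The marginal update `Q(P)`. -/
noncomputable def updQ {X S T Z : Type} [Fintype S] [Fintype T]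
    (pS : S → ℝ) (pTXS : X → S → T → ℝ) (P : X → T → Z → ℝ) (x : X) (z : Z) : ℝ :=
  ∑ t, ∑ s, pS s * pTXS x s t * P x t z

/-- Conditional KL divergence `D(Q ∥ Q' | P_X)`. -/
noncomputable def condKLQ {X Z : Type} [Fintype X] [Fintype Z]
    (pX : X → ℝ) (Q Q' : X → Z → ℝ) : ℝ :=
  ∑ x, pX x * ∑ z, Q x z * Real.log (Q x z / Q' x z)

/-- Log-sum inequality. -/
lemma ba_logsum {ι : Type*} [Fintype ι] (a b : ι → ℝ)
    (ha : ∀ i, 0 ≤ a i) (hb : ∀ i, 0 ≤ b i) (hab : ∀ i, b i = 0 → a i = 0)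
    (hB : 0 < ∑ i, b i) :
    (∑ i, a i) * Real.log ((∑ i, a i) / (∑ i, b i)) ≤ ∑ i, a i * Real.log (a i / b i) := by
  rcases eq_or_lt_of_le (Finset.sum_nonneg (fun i _ => ha i) : (0:ℝ) ≤ ∑ i, a i) with h0 | hApos
  · rw [← h0, zero_mul]
    refine Finset.sum_nonneg (fun i _ => ?_)
    rw [(Finset.sum_eq_zero_iff_of_nonneg (fun i _ => ha i)).mp h0.symm i (mem_univ i), zero_mul]
  · have key : ∀ i, a i - b i * (∑ j, a j) / (∑ j, b j) ≤
        a i * Real.log (a i / b i) - a i * Real.log ((∑ j, a j) / (∑ j, b j)) := by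
      intro i
      rcases eq_or_lt_of_le (ha i) with h0 | hai
      · rw [← h0]
        have : 0 ≤ b i * (∑ j, a j) / (∑ j, b j) :=
          div_nonneg (mul_nonneg (hb i) hApos.le) hB.le
        simpa using this
      · have hbi : 0 < b i := lt_of_le_of_ne (hb i) (fun h => by
          have := hab i h.symm; linarith)
        have h1 : a i * Real.log (a i / b i) - a i * Real.log ((∑ j, a j) / (∑ j, b j)) =
            a i * Real.log ((a i * ∑ j, b j) / (b i * ∑ j, a j)) := by
          rw [← mul_sub, ← Real.log_div (by positivity) (by positivity)]
          congr 2
          field_simp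
        rw [h1]
        have hx : (0:ℝ) < (a i * ∑ j, b j) / (b i * ∑ j, a j) := by positivity
        have hlog := Real.one_sub_inv_le_log_of_pos hx
        rw [inv_div] at hlog
        have h2 := mul_le_mul_of_nonneg_left hlog (le_of_lt hai)
        have h3 : a i * (1 - (b i * ∑ j, a j) / (a i * ∑ j, b j)) =
            a i - b i * (∑ j, a j) / (∑ j, b j) := by
          field_simp
        linarith [h3 ▸ h2]
    have hsum := Finset.sum_le_sum (s := (Finset.univ : Finset ι)) (fun i _ => key i)
    have h4 : ∑ i, (a i - b i * (∑ j, a j) / (∑ j, b j)) = 0 := by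
      rw [Finset.sum_sub_distrib]
      have : ∑ i, b i * (∑ j, a j) / (∑ j, b j) = (∑ i, b i) * (∑ j, a j) / (∑ j, b j) := by
        rw [← Finset.sum_div, ← Finset.sum_mul]
      rw [this]
      field_simp
      ring
    have h5 : ∑ i, (a i * Real.log (a i / b i) - a i * Real.log ((∑ j, a j) / (∑ j, b j))) =
        (∑ i, a i * Real.log (a i / b i)) - (∑ i, a i) * Real.log ((∑ j, a j) / (∑ j, b j)) := by
      rw [Finset.sum_sub_distrib, ← Finset.sum_mul]
    rw [h4, h5] at hsum
    linarith

/-- The per-`x` Csiszár-style inequality behind one BA step. -/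
lemma ba_keyx {T Z : Type} [Fintype T] [Fintype Z] (μ : ℝ)
    (m : T → ℝ) (g : T → Z → ℝ) (Q : Z → ℝ) (Pst : T → Z → ℝ) (Qst : Z → ℝ)
    (hm : ∀ t, 0 ≤ m t) (hmsum : ∑ t, m t = 1)
    (hQ : ∀ z, 0 < Q z)
    (hPst : ∀ t z, 0 ≤ Pst t z) (hPstsum : ∀ t, ∑ z, Pst t z = 1)
    (hQst : ∀ z, Qst z = ∑ t, m t * Pst t z)
    (Λ : T → ℝ) (hΛ : ∀ t, Λ t = ∑ a, Q a * Real.exp (μ * g t a))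
    (P' : T → Z → ℝ) (hP' : ∀ t z, P' t z = Q z * Real.exp (μ * g t z) / Λ t)
    (Q' : Z → ℝ) (hQ' : ∀ z, Q' z = ∑ t, m t * P' t z) :
    (∑ t, m t * (-Real.log (Λ t))) -
      (∑ t, m t * ∑ z, Pst t z * (Real.log (Pst t z / Qst z) - μ * g t z))
    ≤ ∑ z, (Qst z * Real.log (Qst z / Q z) - Qst z * Real.log (Qst z / Q' z)) := by
  have hT : Nonempty T := by
    by_contra h
    rw [not_nonempty_iff] at h
    rw [Finset.univ_eq_empty, Finset.sum_empty] at hmsum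
    exact one_ne_zero hmsum.symm
  have hZ : Nonempty Z := by
    by_contra h
    rw [not_nonempty_iff] at h
    have := hPstsum (Classical.arbitrary T)
    rw [Finset.univ_eq_empty, Finset.sum_empty] at this
    exact one_ne_zero this.symm
  have hΛpos : ∀ t, 0 < Λ t := by
    intro t
    rw [hΛ]
    exact Finset.sum_pos (fun z _ => mul_pos (hQ z) (Real.exp_pos _)) Finset.univ_nonempty
  have hP'pos : ∀ t z, 0 < P' t z := by
    intro t z
    rw [hP']
    exact div_pos (mul_pos (hQ z) (Real.exp_pos _)) (hΛpos t)
  have hmex : ∃ t, 0 < m t := by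
    by_contra h
    push_neg at h
    have : ∑ t, m t = 0 := Finset.sum_eq_zero (fun t _ => le_antisymm (h t) (hm t))
    rw [hmsum] at this
    exact one_ne_zero this
  have hQ'pos : ∀ z, 0 < Q' z := by
    intro z
    obtain ⟨t0, ht0⟩ := hmex
    rw [hQ']
    exact Finset.sum_pos' (fun t _ => mul_nonneg (hm t) (hP'pos t z).le)
      ⟨t0, Finset.mem_univ t0, mul_pos ht0 (hP'pos t0 z)⟩
  have hQstnn : ∀ z, 0 ≤ Qst z := by
    intro z
    rw [hQst]
    exact Finset.sum_nonneg (fun t _ => mul_nonneg (hm t) (hPst t z))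
  have stepA : ∀ z, Qst z * Real.log (Qst z / Q' z) ≤
      ∑ t, (m t * Pst t z) * Real.log ((m t * Pst t z) / (m t * P' t z)) := by
    intro z
    have h := ba_logsum (fun t => m t * Pst t z) (fun t => m t * P' t z)
      (fun t => mul_nonneg (hm t) (hPst t z))
      (fun t => mul_nonneg (hm t) (hP'pos t z).le)
      (fun t ht => by
        rcases mul_eq_zero.mp ht with h0 | h0
        · rw [h0, zero_mul]
        · exact absurd h0 (hP'pos t z).ne')
      (by rw [← hQ' z]; exact hQ'pos z)
    rw [← hQst z, ← hQ' z] at h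
    exact h
  have stepB : ∀ t z, (m t * Pst t z) * Real.log ((m t * Pst t z) / (m t * P' t z)) =
      (m t * Pst t z) * (Real.log (Pst t z / Qst z) + Real.log (Qst z / Q z)
        - μ * g t z + Real.log (Λ t)) := by
    intro t z
    rcases eq_or_ne (m t * Pst t z) 0 with h0 | hne
    · rw [h0, zero_mul, zero_mul]
    · have hmt : 0 < m t := (hm t).lt_of_ne (fun h => hne (by rw [← h, zero_mul]))
      have hpst : 0 < Pst t z := (hPst t z).lt_of_ne
        (fun h => hne (by rw [← h, mul_zero]))
      have hQstpos : 0 < Qst z := by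
        rw [hQst]
        exact lt_of_lt_of_le (mul_pos hmt hpst)
          (Finset.single_le_sum (fun t' _ => mul_nonneg (hm t') (hPst t' z))
            (Finset.mem_univ t))
      congr 1
      rw [mul_div_mul_left _ _ hmt.ne']
      rw [Real.log_div hpst.ne' (hP'pos t z).ne', hP',
        Real.log_div (mul_pos (hQ z) (Real.exp_pos _)).ne' (hΛpos t).ne',
        Real.log_mul (hQ z).ne' (Real.exp_ne_zero _), Real.log_exp,
        Real.log_div hpst.ne' hQstpos.ne', Real.log_div hQstpos.ne' (hQ z).ne']
      ring
  have e2 : ∑ z, ∑ t, (m t * Pst t z) * (Real.log (Pst t z / Qst z) - μ * g t z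
      + Real.log (Λ t)) =
      (∑ t, m t * Real.log (Λ t)) +
        ∑ t, m t * ∑ z, Pst t z * (Real.log (Pst t z / Qst z) - μ * g t z) := by
    rw [Finset.sum_comm, ← Finset.sum_add_distrib]
    refine Finset.sum_congr rfl (fun t _ => ?_)
    have : ∑ z, (m t * Pst t z) * (Real.log (Pst t z / Qst z) - μ * g t z
        + Real.log (Λ t)) =
        ∑ z, (m t * (Pst t z * (Real.log (Pst t z / Qst z) - μ * g t z))
          + (m t * Real.log (Λ t)) * Pst t z) :=
      Finset.sum_congr rfl (fun z _ => by ring)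
    rw [this, Finset.sum_add_distrib, ← Finset.mul_sum, ← Finset.mul_sum, hPstsum t,
      mul_one]
    ring
  have e1 : ∀ z, ∑ t, (m t * Pst t z) * (Real.log (Pst t z / Qst z) + Real.log (Qst z / Q z)
      - μ * g t z + Real.log (Λ t)) =
      Qst z * Real.log (Qst z / Q z) +
        ∑ t, (m t * Pst t z) * (Real.log (Pst t z / Qst z) - μ * g t z + Real.log (Λ t)) := by
    intro z
    have h : Qst z * Real.log (Qst z / Q z) =
        ∑ t, (m t * Pst t z) * Real.log (Qst z / Q z) := by
      rw [← Finset.sum_mul, ← hQst]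
    rw [h, ← Finset.sum_add_distrib]
    exact Finset.sum_congr rfl (fun t _ => by ring)
  have lhs_eq : (∑ t, m t * (-Real.log (Λ t))) = -∑ t, m t * Real.log (Λ t) := by
    rw [← Finset.sum_neg_distrib]
    exact Finset.sum_congr rfl (fun t _ => by ring)
  have hAB : ∑ z, Qst z * Real.log (Qst z / Q' z) ≤
      ∑ z, ∑ t, (m t * Pst t z) * (Real.log (Pst t z / Qst z) + Real.log (Qst z / Q z)
        - μ * g t z + Real.log (Λ t)) :=
    Finset.sum_le_sum (fun z _ => (stepA z).trans
      (le_of_eq (Finset.sum_congr rfl (fun t _ => stepB t z))))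
  calc (∑ t, m t * (-Real.log (Λ t))) -
      (∑ t, m t * ∑ z, Pst t z * (Real.log (Pst t z / Qst z) - μ * g t z))
      = ∑ z, Qst z * Real.log (Qst z / Q z) -
        (∑ z, Qst z * Real.log (Qst z / Q z) +
          ∑ z, ∑ t, (m t * Pst t z) * (Real.log (Pst t z / Qst z) - μ * g t z
            + Real.log (Λ t))) := by
        rw [lhs_eq, e2]
        ring
    _ = ∑ z, Qst z * Real.log (Qst z / Q z) -
        ∑ z, ∑ t, (m t * Pst t z) * (Real.log (Pst t z / Qst z) + Real.log (Qst z / Q z)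
          - μ * g t z + Real.log (Λ t)) := by
        rw [← Finset.sum_add_distrib]
        congr 1
        exact (Finset.sum_congr rfl (fun z _ => (e1 z))).symm
    _ ≤ ∑ z, Qst z * Real.log (Qst z / Q z) -
        ∑ z, Qst z * Real.log (Qst z / Q' z) := sub_le_sub_left hAB _
    _ = ∑ z, (Qst z * Real.log (Qst z / Q z) - Qst z * Real.log (Qst z / Q' z)) :=
        (Finset.sum_sub_distrib _ _).symm

lemma ba_sum3_sub {X T Z : Type} [Fintype X] [Fintype T] [Fintype Z]
    (μ : ℝ) (A B : X → T → Z → ℝ) :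
    ∑ x, ∑ t, ∑ z, (A x t z - μ * B x t z) =
      (∑ x, ∑ t, ∑ z, A x t z) - μ * ∑ x, ∑ t, ∑ z, B x t z := by
  simp only [Finset.sum_sub_distrib, Finset.mul_sum]

/-- Rewriting `Fmu` as an `x, t`-weighted sum. -/
lemma Fmu_eq {X S T Z : Type} [Fintype X] [Fintype S] [Fintype T] [Fintype Z]
    (μ : ℝ) (pX : X → ℝ) (pS : S → ℝ) (pTXS : X → S → T → ℝ) (d : S → Z → ℝ)
    (hpS : ∀ s, 0 ≤ pS s) (hpTXS : ∀ x s t, 0 ≤ pTXS x s t)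
    (P : X → T → Z → ℝ) (Q : X → Z → ℝ) :
    Fmu μ pX pS pTXS d P Q = ∑ x, pX x * ∑ t, (∑ s, pS s * pTXS x s t) *
      ∑ z, P x t z * (Real.log (P x t z / Q x z) - μ * condExpD pS pTXS d x t z) := by
  have hmg : ∀ x t z, ∑ s, pS s * pTXS x s t * d s z =
      (∑ s, pS s * pTXS x s t) * condExpD pS pTXS d x t z := by
    intro x t z
    rcases eq_or_ne (∑ s, pS s * pTXS x s t) 0 with h0 | hne
    · rw [h0, zero_mul]
      refine Finset.sum_eq_zero (fun s _ => ?_)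
      have := (Finset.sum_eq_zero_iff_of_nonneg
        (fun s _ => mul_nonneg (hpS s) (hpTXS x s t))).mp h0 s (mem_univ s)
      rw [this, zero_mul]
    · unfold condExpD
      rw [Finset.mul_sum]
      refine Finset.sum_congr rfl (fun s _ => ?_)
      field_simp
  have h1 : ∑ x, ∑ t, (pX x * ∑ s, pS s * pTXS x s t) *
        ∑ z, P x t z * Real.log (P x t z / Q x z)
      = ∑ x, ∑ t, ∑ z, (pX x * ∑ s, pS s * pTXS x s t) *
          (P x t z * Real.log (P x t z / Q x z)) :=
    Finset.sum_congr rfl (fun x _ => Finset.sum_congr rfl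
      (fun t _ => Finset.mul_sum _ _ _))
  have h2 : ∑ x, ∑ s, ∑ t, ∑ z, pX x * pS s * pTXS x s t * P x t z * d s z
      = ∑ x, ∑ t, ∑ z, (pX x * ∑ s, pS s * pTXS x s t) *
          (condExpD pS pTXS d x t z * P x t z) := by
    refine Finset.sum_congr rfl (fun x _ => ?_)
    rw [Finset.sum_comm]
    refine Finset.sum_congr rfl (fun t _ => ?_)
    rw [Finset.sum_comm]
    refine Finset.sum_congr rfl (fun z _ => ?_)
    rw [show (pX x * ∑ s, pS s * pTXS x s t) * (condExpD pS pTXS d x t z * P x t z)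
        = pX x * ((∑ s, pS s * pTXS x s t) * condExpD pS pTXS d x t z) * P x t z by ring,
      ← hmg x t z, Finset.mul_sum, Finset.sum_mul]
    exact Finset.sum_congr rfl (fun s _ => by ring)
  have h4 : ∑ x, pX x * ∑ t, (∑ s, pS s * pTXS x s t) *
        ∑ z, P x t z * (Real.log (P x t z / Q x z) - μ * condExpD pS pTXS d x t z)
      = ∑ x, ∑ t, ∑ z, pX x * ((∑ s, pS s * pTXS x s t) *
          (P x t z * (Real.log (P x t z / Q x z) - μ * condExpD pS pTXS d x t z))) :=
    Finset.sum_congr rfl (fun x _ => (Finset.mul_sum _ _ _).trans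
      (Finset.sum_congr rfl (fun t _ => by rw [Finset.mul_sum, Finset.mul_sum])))
  unfold Fmu pXT
  rw [h1, h2, h4, ← ba_sum3_sub]
  refine Finset.sum_congr rfl (fun x _ => Finset.sum_congr rfl
    (fun t _ => Finset.sum_congr rfl (fun z _ => by ring)))

/-- telescoping consequence of the BA identity: if
`F_μ(P⋆, Q⋆) ≤ F_μ(P^{(k+1)}, Q^{(k)})` for all `k` (with `Q⋆ = Q(P⋆)`), then for all
`N > M ≥ 1` the partial sums `Σ_{k=M}^{N−1}[F_μ(P^{(k+1)}, Q^{(k)}) − F_μ(P⋆, Q⋆)]` are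
nonnegative and bounded by `D(Q⋆ ∥ Q^{(M)} | P_X) − D(Q⋆ ∥ Q^{(N)} | P_X)`; hence the series
converges and `F_μ(P^{(k+1)}, Q^{(k)}) → F_μ(P⋆, Q⋆)`. -/
theorem stmt6 {X S T Z : Type} [Fintype X] [Fintype S] [Fintype T] [Fintype Z]
    (μ : ℝ) (hμ : μ ≤ 0)
    (pX : X → ℝ) (pS : S → ℝ) (pTXS : X → S → T → ℝ) (d : S → Z → ℝ)
    (hpX : ∀ x, 0 ≤ pX x) (hpXsum : ∑ x, pX x = 1)
    (hpS : ∀ s, 0 ≤ pS s) (hpSsum : ∑ s, pS s = 1)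
    (hpTXS : ∀ x s t, 0 ≤ pTXS x s t) (hpTXSsum : ∀ x s, ∑ t, pTXS x s t = 1)
    (hd : ∀ s z, 0 ≤ d s z)
    (Qseq : ℕ → X → Z → ℝ) (Pseq : ℕ → X → T → Z → ℝ)
    (hQ0pos : ∀ x z, 0 < Qseq 0 x z) (hQ0sum : ∀ x, ∑ z, Qseq 0 x z = 1)
    (hPrec : ∀ k, Pseq (k + 1) = updP μ pS pTXS d (Qseq k))
    (hQrec : ∀ k, Qseq (k + 1) = updQ pS pTXS (Pseq (k + 1)))
    (Pstar : X → T → Z → ℝ) (Qstar : X → Z → ℝ)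
    (hPstar : ∀ x t z, 0 ≤ Pstar x t z) (hPstarsum : ∀ x t, ∑ z, Pstar x t z = 1)
    (hQstar : Qstar = updQ pS pTXS Pstar)
    (hle : ∀ k, Fmu μ pX pS pTXS d Pstar Qstar ≤
      Fmu μ pX pS pTXS d (Pseq (k + 1)) (Qseq k)) :
    (∀ M N : ℕ, 1 ≤ M → M < N →
      0 ≤ ∑ k ∈ Finset.Ico M N,
            (Fmu μ pX pS pTXS d (Pseq (k + 1)) (Qseq k) -
              Fmu μ pX pS pTXS d Pstar Qstar) ∧
      ∑ k ∈ Finset.Ico M N,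
            (Fmu μ pX pS pTXS d (Pseq (k + 1)) (Qseq k) -
              Fmu μ pX pS pTXS d Pstar Qstar) ≤
        condKLQ pX Qstar (Qseq M) - condKLQ pX Qstar (Qseq N)) ∧
    Summable (fun k => Fmu μ pX pS pTXS d (Pseq (k + 1)) (Qseq k) -
      Fmu μ pX pS pTXS d Pstar Qstar) ∧
    Tendsto (fun k => Fmu μ pX pS pTXS d (Pseq (k + 1)) (Qseq k)) atTop
      (nhds (Fmu μ pX pS pTXS d Pstar Qstar)) := by
  -- nonemptiness
  have hXne : Nonempty X := by
    by_contra h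
    rw [not_nonempty_iff] at h
    rw [Finset.univ_eq_empty, Finset.sum_empty] at hpXsum
    exact one_ne_zero hpXsum.symm
  have hZne : Nonempty Z := by
    by_contra h
    rw [not_nonempty_iff] at h
    have := hQ0sum (Classical.arbitrary X)
    rw [Finset.univ_eq_empty, Finset.sum_empty] at this
    exact one_ne_zero this.symm
  -- weights
  have hmnn : ∀ x t, 0 ≤ ∑ s, pS s * pTXS x s t :=
    fun x t => Finset.sum_nonneg (fun s _ => mul_nonneg (hpS s) (hpTXS x s t))
  have hmsum : ∀ x, ∑ t, ∑ s, pS s * pTXS x s t = 1 := by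
    intro x
    rw [Finset.sum_comm]
    calc ∑ s, ∑ t, pS s * pTXS x s t = ∑ s, pS s * ∑ t, pTXS x s t :=
          Finset.sum_congr rfl (fun s _ => (Finset.mul_sum _ _ _).symm)
      _ = 1 := by
          rw [Finset.sum_congr rfl (fun s _ => by rw [hpTXSsum x s, mul_one])]
          exact hpSsum
  -- positivity and normalization of the iterates
  have hQfacts : ∀ k, (∀ x z, 0 < Qseq k x z) ∧ (∀ x, ∑ z, Qseq k x z = 1) := by
    intro k
    induction k with
    | zero => exact ⟨hQ0pos, hQ0sum⟩
    | succ n ih =>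
      have hΛpos : ∀ x t, 0 < ∑ a, Qseq n x a *
          Real.exp (μ * condExpD pS pTXS d x t a) := fun x t =>
        Finset.sum_pos (fun a _ => mul_pos (ih.1 x a) (Real.exp_pos _))
          Finset.univ_nonempty
      have hP'pos : ∀ x t z, 0 < Pseq (n + 1) x t z := by
        intro x t z
        rw [hPrec n]
        unfold updP
        exact div_pos (mul_pos (ih.1 x z) (Real.exp_pos _)) (hΛpos x t)
      have hP'sum : ∀ x t, ∑ z, Pseq (n + 1) x t z = 1 := by
        intro x t
        rw [hPrec n]
        unfold updP
        rw [← Finset.sum_div, div_self (hΛpos x t).ne']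
      constructor
      · intro x z
        rw [hQrec n]
        unfold updQ
        have hex : ∃ t, 0 < ∑ s, pS s * pTXS x s t := by
          by_contra h
          push_neg at h
          have h0 : ∑ t, ∑ s, pS s * pTXS x s t = 0 :=
            Finset.sum_eq_zero (fun t _ => le_antisymm (h t) (hmnn x t))
          rw [hmsum x] at h0
          exact one_ne_zero h0
        obtain ⟨t0, ht0⟩ := hex
        have hs0 : ∃ s, 0 < pS s * pTXS x s t0 := by
          by_contra h
          push_neg at h
          have h0 : ∑ s, pS s * pTXS x s t0 = 0 :=
            Finset.sum_eq_zero (fun s _ => le_antisymm (h s)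
              (mul_nonneg (hpS s) (hpTXS x s t0)))
          rw [h0] at ht0
          exact lt_irrefl 0 ht0
        obtain ⟨s0, hs0⟩ := hs0
        refine Finset.sum_pos' (fun t _ => Finset.sum_nonneg (fun s _ =>
          mul_nonneg (mul_nonneg (hpS s) (hpTXS x s t)) (hP'pos x t z).le))
          ⟨t0, Finset.mem_univ t0, ?_⟩
        refine Finset.sum_pos' (fun s _ =>
          mul_nonneg (mul_nonneg (hpS s) (hpTXS x s t0)) (hP'pos x t0 z).le)
          ⟨s0, Finset.mem_univ s0, mul_pos hs0 (hP'pos x t0 z)⟩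
      · intro x
        rw [hQrec n]
        unfold updQ
        rw [Finset.sum_comm]
        calc ∑ t, ∑ z, ∑ s, pS s * pTXS x s t * Pseq (n + 1) x t z
            = ∑ t, ∑ s, ∑ z, pS s * pTXS x s t * Pseq (n + 1) x t z :=
              Finset.sum_congr rfl (fun t _ => Finset.sum_comm)
          _ = ∑ t, ∑ s, pS s * pTXS x s t := by
              refine Finset.sum_congr rfl (fun t _ => Finset.sum_congr rfl (fun s _ => ?_))
              rw [← Finset.mul_sum, hP'sum x t, mul_one]
          _ = 1 := hmsum x
  -- Qstar facts
  have hQstz : ∀ x z, Qstar x z = ∑ t, (∑ s, pS s * pTXS x s t) * Pstar x t z := by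
    intro x z
    rw [hQstar]
    unfold updQ
    exact Finset.sum_congr rfl (fun t _ => (Finset.sum_mul _ _ _).symm)
  have hQstsum : ∀ x, ∑ z, Qstar x z = 1 := by
    intro x
    calc ∑ z, Qstar x z = ∑ z, ∑ t, (∑ s, pS s * pTXS x s t) * Pstar x t z :=
          Finset.sum_congr rfl (fun z _ => hQstz x z)
      _ = ∑ t, ∑ z, (∑ s, pS s * pTXS x s t) * Pstar x t z := Finset.sum_comm
      _ = ∑ t, ∑ s, pS s * pTXS x s t := by
          refine Finset.sum_congr rfl (fun t _ => ?_)
          rw [← Finset.mul_sum, hPstarsum x t, mul_one]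
      _ = 1 := hmsum x
  -- the one-step inequality
  have step : ∀ k, Fmu μ pX pS pTXS d (Pseq (k + 1)) (Qseq k) -
      Fmu μ pX pS pTXS d Pstar Qstar ≤
      condKLQ pX Qstar (Qseq k) - condKLQ pX Qstar (Qseq (k + 1)) := by
    intro k
    have hQk := (hQfacts k).1
    have hΛpos : ∀ x t, 0 < ∑ a, Qseq k x a *
        Real.exp (μ * condExpD pS pTXS d x t a) := fun x t =>
      Finset.sum_pos (fun a _ => mul_pos (hQk x a) (Real.exp_pos _))
        Finset.univ_nonempty
    have hA : ∀ x t, ∑ z, Pseq (k + 1) x t z *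
        (Real.log (Pseq (k + 1) x t z / Qseq k x z) - μ * condExpD pS pTXS d x t z) =
        -Real.log (∑ a, Qseq k x a * Real.exp (μ * condExpD pS pTXS d x t a)) := by
      intro x t
      have hterm : ∀ z, Pseq (k + 1) x t z *
          (Real.log (Pseq (k + 1) x t z / Qseq k x z) - μ * condExpD pS pTXS d x t z) =
          Pseq (k + 1) x t z *
            (-Real.log (∑ a, Qseq k x a * Real.exp (μ * condExpD pS pTXS d x t a))) := by
        intro z
        have hratio : Pseq (k + 1) x t z / Qseq k x z =
            Real.exp (μ * condExpD pS pTXS d x t z) /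
              ∑ a, Qseq k x a * Real.exp (μ * condExpD pS pTXS d x t a) := by
          rw [hPrec k]
          unfold updP
          rw [div_right_comm, mul_div_cancel_left₀ _ (hQk x z).ne']
        rw [hratio, Real.log_div (Real.exp_ne_zero _) (hΛpos x t).ne', Real.log_exp]
        ring
      rw [Finset.sum_congr rfl (fun z _ => hterm z), ← Finset.sum_mul]
      have hsum1 : ∑ z, Pseq (k + 1) x t z = 1 := by
        rw [hPrec k]
        unfold updP
        rw [← Finset.sum_div, div_self (hΛpos x t).ne']
      rw [hsum1, one_mul]
    rw [Fmu_eq μ pX pS pTXS d hpS hpTXS (Pseq (k + 1)) (Qseq k),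
      Fmu_eq μ pX pS pTXS d hpS hpTXS Pstar Qstar]
    unfold condKLQ
    rw [← Finset.sum_sub_distrib, ← Finset.sum_sub_distrib]
    refine Finset.sum_le_sum (fun x _ => ?_)
    rw [← mul_sub, ← mul_sub]
    refine mul_le_mul_of_nonneg_left ?_ (hpX x)
    calc (∑ t, (∑ s, pS s * pTXS x s t) * ∑ z, Pseq (k + 1) x t z *
          (Real.log (Pseq (k + 1) x t z / Qseq k x z) - μ * condExpD pS pTXS d x t z)) -
        ∑ t, (∑ s, pS s * pTXS x s t) * ∑ z, Pstar x t z *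
          (Real.log (Pstar x t z / Qstar x z) - μ * condExpD pS pTXS d x t z)
        = (∑ t, (∑ s, pS s * pTXS x s t) *
            (-Real.log (∑ a, Qseq k x a * Real.exp (μ * condExpD pS pTXS d x t a)))) -
          ∑ t, (∑ s, pS s * pTXS x s t) * ∑ z, Pstar x t z *
            (Real.log (Pstar x t z / Qstar x z) - μ * condExpD pS pTXS d x t z) := by
          rw [Finset.sum_congr rfl (fun t _ => by rw [hA x t])]
      _ ≤ ∑ z, (Qstar x z * Real.log (Qstar x z / Qseq k x z) -
            Qstar x z * Real.log (Qstar x z / Qseq (k + 1) x z)) := by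
          refine ba_keyx μ (fun t => ∑ s, pS s * pTXS x s t)
            (fun t z => condExpD pS pTXS d x t z) (Qseq k x) (Pstar x) (Qstar x)
            (fun t => hmnn x t) (hmsum x) (hQk x) (fun t z => hPstar x t z)
            (fun t => hPstarsum x t) (fun z => hQstz x z)
            (fun t => ∑ a, Qseq k x a * Real.exp (μ * condExpD pS pTXS d x t a))
            (fun t => rfl) (Pseq (k + 1) x)
            (fun t z => by rw [hPrec k]; rfl) (Qseq (k + 1) x)
            (fun z => by
              rw [hQrec k]
              unfold updQ
              exact Finset.sum_congr rfl (fun t _ => (Finset.sum_mul _ _ _).symm))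
      _ = (∑ z, Qstar x z * Real.log (Qstar x z / Qseq k x z)) -
            ∑ z, Qstar x z * Real.log (Qstar x z / Qseq (k + 1) x z) :=
          Finset.sum_sub_distrib _ _
  -- nonnegativity of the conditional KL divergences
  have hKLnn : ∀ n, 0 ≤ condKLQ pX Qstar (Qseq n) := by
    intro n
    unfold condKLQ
    refine Finset.sum_nonneg (fun x _ => mul_nonneg (hpX x) ?_)
    have h := ba_logsum (Qstar x) (Qseq n x)
      (fun z => by
        rw [hQstz x z]
        exact Finset.sum_nonneg (fun t _ => mul_nonneg (hmnn x t) (hPstar x t z)))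
      (fun z => ((hQfacts n).1 x z).le)
      (fun z h0 => absurd h0 ((hQfacts n).1 x z).ne')
      (by rw [(hQfacts n).2 x]; exact one_pos)
    rw [hQstsum x, (hQfacts n).2 x] at h
    simpa using h
  refine ⟨?_, ?_, ?_⟩
  · intro M N hM hMN
    refine ⟨Finset.sum_nonneg (fun k _ => sub_nonneg.mpr (hle k)), ?_⟩
    calc ∑ k ∈ Finset.Ico M N, (Fmu μ pX pS pTXS d (Pseq (k + 1)) (Qseq k) -
          Fmu μ pX pS pTXS d Pstar Qstar)
        ≤ ∑ k ∈ Finset.Ico M N, (condKLQ pX Qstar (Qseq k) -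
            condKLQ pX Qstar (Qseq (k + 1))) :=
          Finset.sum_le_sum (fun k _ => step k)
      _ = condKLQ pX Qstar (Qseq M) - condKLQ pX Qstar (Qseq N) := by
          rw [Finset.sum_Ico_eq_sub _ hMN.le,
            Finset.sum_range_sub' (fun i => condKLQ pX Qstar (Qseq i)) N,
            Finset.sum_range_sub' (fun i => condKLQ pX Qstar (Qseq i)) M]
          ring
  · refine summable_of_sum_range_le (c := condKLQ pX Qstar (Qseq 0))
      (fun n => sub_nonneg.mpr (hle n)) (fun n => ?_)
    calc ∑ k ∈ Finset.range n, (Fmu μ pX pS pTXS d (Pseq (k + 1)) (Qseq k) -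
          Fmu μ pX pS pTXS d Pstar Qstar)
        ≤ ∑ k ∈ Finset.range n, (condKLQ pX Qstar (Qseq k) -
            condKLQ pX Qstar (Qseq (k + 1))) :=
          Finset.sum_le_sum (fun k _ => step k)
      _ = condKLQ pX Qstar (Qseq 0) - condKLQ pX Qstar (Qseq n) :=
          Finset.sum_range_sub' (fun i => condKLQ pX Qstar (Qseq i)) n
      _ ≤ condKLQ pX Qstar (Qseq 0) := by linarith [hKLnn n]
  · have hsum : Summable (fun k => Fmu μ pX pS pTXS d (Pseq (k + 1)) (Qseq k) -
        Fmu μ pX pS pTXS d Pstar Qstar) := by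
      refine summable_of_sum_range_le (c := condKLQ pX Qstar (Qseq 0))
        (fun n => sub_nonneg.mpr (hle n)) (fun n => ?_)
      calc ∑ k ∈ Finset.range n, (Fmu μ pX pS pTXS d (Pseq (k + 1)) (Qseq k) -
            Fmu μ pX pS pTXS d Pstar Qstar)
          ≤ ∑ k ∈ Finset.range n, (condKLQ pX Qstar (Qseq k) -
              condKLQ pX Qstar (Qseq (k + 1))) :=
            Finset.sum_le_sum (fun k _ => step k)
        _ = condKLQ pX Qstar (Qseq 0) - condKLQ pX Qstar (Qseq n) :=
            Finset.sum_range_sub' (fun i => condKLQ pX Qstar (Qseq i)) n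
        _ ≤ condKLQ pX Qstar (Qseq 0) := by linarith [hKLnn n]
    have h0 := hsum.tendsto_atTop_zero
    have h2 := h0.add_const (Fmu μ pX pS pTXS d Pstar Qstar)
    simpa using h2
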